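/- For a cyclic group C_n, the Frobenius–Schur exponent of Vec_{C_n}^ω, given by lcm{|g|·|ω_g| : g ∈ C_n}, equals n² if and only if ω is a generator of H³(C_n, C^×) ≅ C_n; here |ω_g| denotes the order of the restriction of ω to the subgroup generated by g. -/
import Mathlib

theorem aux_dvd (n d k : ℕ) (hd : d ∣ n) : d * Nat.gcd n k ∣ n * Nat.gcd d k := by
  rw [← Nat.gcd_mul_left d n k, ← Nat.gcd_mul_left n d k]
  exact Nat.dvd_gcd ((Nat.gcd_dvd_left _ _).trans (by rw [mul_comm]))
    ((Nat.gcd_dvd_right _ _).trans (Nat.mul_dvd_mul_right hd k))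

theorem aux_div_dvd (n d k : ℕ) (hd : d ∣ n) (hdpos : 0 < d) :
    d / Nat.gcd d k ∣ n / Nat.gcd n k := by
  have hg : 0 < Nat.gcd d k := Nat.gcd_pos_of_pos_left k hdpos
  rw [Nat.dvd_div_iff_mul_dvd (Nat.gcd_dvd_left n k),
    ← Nat.mul_dvd_mul_iff_right hg, mul_comm (Nat.gcd n k) (d / Nat.gcd d k),
    mul_right_comm, Nat.div_mul_cancel (Nat.gcd_dvd_left d k)]
  exact aux_dvd n d k hd

/-- Modeling `H³(C_n, ℂˣ) ≅ ℤ/n` by `k`, the restriction of the class `k` to the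
subgroup of order `d ∣ n` has order `d / gcd d k`, so
`|g|·|ω_g| = d * (d / gcd d k)` for an element `g` of order `d`. -/
theorem stmt_13 (n : ℕ) (hn : 1 ≤ n) (k : ℕ) :
    Finset.lcm (Nat.divisors n) (fun d => d * (d / Nat.gcd d k)) =
        n * (n / Nat.gcd n k) ∧
      (Finset.lcm (Nat.divisors n) (fun d => d * (d / Nat.gcd d k)) = n ^ 2 ↔
        Nat.gcd n k = 1) := by
  have hn0 : n ≠ 0 := by omega
  have hmain : Finset.lcm (Nat.divisors n) (fun d => d * (d / Nat.gcd d k)) =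
      n * (n / Nat.gcd n k) := by
    apply Nat.dvd_antisymm
    · apply Finset.lcm_dvd
      intro d hdmem
      obtain ⟨hd, -⟩ := Nat.mem_divisors.mp hdmem
      exact mul_dvd_mul hd (aux_div_dvd n d k hd (Nat.pos_of_mem_divisors hdmem))
    · exact Finset.dvd_lcm (Nat.mem_divisors_self n hn0)
  refine ⟨hmain, ?_⟩
  rw [hmain, sq]
  constructor
  · intro h
    have h2 : n / Nat.gcd n k = n := Nat.eq_of_mul_eq_mul_left (by omega) h
    have hgdvd : Nat.gcd n k ∣ n := Nat.gcd_dvd_left n k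
    rcases (Nat.div_eq_self.mp h2) with h3 | h3
    · omega
    · exact h3
  · intro h
    rw [h, Nat.div_one]
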